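/- Let V = (ZMod 2)^n, let C be a 2^n × 2^n unitary matrix indexed by V, let f : V × V → ℝ, and let M ⊆ V × V be any subset. With Z^s the diagonal matrix with (Z^s)_{w,w} = (−1)^{s·w} and f̂_{s,s'} = 2^{−2n} Σ_{w,z ∈ V} f(w,z)·(−1)^{s·w}·(−1)^{s'·z}, one has | (1/2^n) Σ_{w,z ∈ V} |C_{z,w}|² f(w,z) − Σ_{(s,s') ∈ M} f̂_{s,s'} · (1/2^n)·Tr(Z^s Cᴴ Z^{s'} C) | ≤ Σ_{(s,s') ∉ M} |f̂_{s,s'}|. -/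

import Mathlib

open Matrix
open scoped ComplexOrder

/-- The real sign `(-1)^a` of an element `a : ZMod 2`. -/
def signOf (a : ZMod 2) : ℝ := if a = 0 then 1 else -1

private lemma zmod2_em (a : ZMod 2) : a = 0 ∨ a = 1 := by revert a; decide

private lemma signOf_add (a b : ZMod 2) : signOf (a + b) = signOf a * signOf b := by
  rcases zmod2_em a with rfl | rfl <;> rcases zmod2_em b with rfl | rfl <;>
    norm_num [signOf] <;> decide

private lemma abs_signOf (a : ZMod 2) : |signOf a| = 1 := by
  rcases zmod2_em a with rfl | rfl <;> norm_num [signOf]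

private lemma orthoSum (n : ℕ) (v : Fin n → ZMod 2) :
    ∑ s : Fin n → ZMod 2, signOf (s ⬝ᵥ v) = if v = 0 then ((2 : ℝ) ^ n) else 0 := by
  split_ifs with h
  · subst h
    simp [dotProduct_zero, signOf, Finset.card_univ, Fintype.card_fun]
  · obtain ⟨i, hi⟩ : ∃ i, v i ≠ 0 := by
      by_contra h'; push_neg at h'; exact h (funext h')
    have hv1 : v i = 1 := by
      have : ∀ a : ZMod 2, a ≠ 0 → a = 1 := by decide
      exact this _ hi
    apply Finset.sum_ninvolution (fun s => s + Pi.single i 1)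
    · intro s
      have h2 : (s + Pi.single i 1) ⬝ᵥ v = s ⬝ᵥ v + 1 := by
        rw [add_dotProduct, single_dotProduct, hv1, mul_one]
      rw [h2, signOf_add]
      have h3 : signOf 1 = -1 := by norm_num [signOf]
      rw [h3]; ring
    · intro s _
      simp only [ne_eq, add_eq_left]
      intro hc
      have := congrFun hc i
      simp at this
    · intro s; exact Finset.mem_univ _
    · intro s
      have h4 : Pi.single i 1 + Pi.single i 1 = (0 : Fin n → ZMod 2) := by
        rw [← Pi.single_add]
        norm_num
        decide
      rw [add_assoc, h4, add_zero]

private lemma vec_add_eq_zero {n : ℕ} (a b : Fin n → ZMod 2) : a + b = 0 ↔ a = b := by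
  constructor
  · intro h
    funext i
    have hi := congrFun h i
    have : ∀ x y : ZMod 2, x + y = 0 → x = y := by decide
    exact this _ _ hi
  · rintro rfl
    funext i
    have : ∀ x : ZMod 2, x + x = 0 := by decide
    exact this _

private lemma inversion (n : ℕ) (f : (Fin n → ZMod 2) × (Fin n → ZMod 2) → ℝ)
    (w z : Fin n → ZMod 2) :
    ∑ p : (Fin n → ZMod 2) × (Fin n → ZMod 2),
      (((2 : ℝ) ^ (2 * n))⁻¹ *
          ∑ w', ∑ z', f (w', z') * signOf (p.1 ⬝ᵥ w') * signOf (p.2 ⬝ᵥ z')) *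
        (signOf (p.1 ⬝ᵥ w) * signOf (p.2 ⬝ᵥ z)) = f (w, z) := by
  have key : ∀ w' z' : Fin n → ZMod 2,
      (∑ s : Fin n → ZMod 2, ∑ s' : Fin n → ZMod 2,
        f (w', z') * signOf (s ⬝ᵥ w') * signOf (s' ⬝ᵥ z') *
          (signOf (s ⬝ᵥ w) * signOf (s' ⬝ᵥ z)))
      = f (w', z') * ((if w' = w then ((2:ℝ)^n) else 0) * (if z' = z then ((2:ℝ)^n) else 0)) := by
    intro w' z'
    have h1 : ∀ s s' : Fin n → ZMod 2,
        f (w', z') * signOf (s ⬝ᵥ w') * signOf (s' ⬝ᵥ z') *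
          (signOf (s ⬝ᵥ w) * signOf (s' ⬝ᵥ z))
        = f (w', z') * (signOf (s ⬝ᵥ (w' + w)) * signOf (s' ⬝ᵥ (z' + z))) := by
      intro s s'
      rw [dotProduct_add, dotProduct_add, signOf_add, signOf_add]
      ring
    simp only [h1]
    have h3 : ((∑ s : Fin n → ZMod 2, signOf (s ⬝ᵥ (w' + w))) *
        ∑ s' : Fin n → ZMod 2, signOf (s' ⬝ᵥ (z' + z)))
        = (if w' = w then ((2:ℝ)^n) else 0) * (if z' = z then ((2:ℝ)^n) else 0) := by
      rw [orthoSum, orthoSum]; simp only [vec_add_eq_zero]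
    rw [← h3, Fintype.sum_mul_sum]
    simp only [Finset.mul_sum]
  calc ∑ p : (Fin n → ZMod 2) × (Fin n → ZMod 2),
      (((2 : ℝ) ^ (2 * n))⁻¹ *
          ∑ w', ∑ z', f (w', z') * signOf (p.1 ⬝ᵥ w') * signOf (p.2 ⬝ᵥ z')) *
        (signOf (p.1 ⬝ᵥ w) * signOf (p.2 ⬝ᵥ z))
      = ((2 : ℝ) ^ (2 * n))⁻¹ * ∑ p : (Fin n → ZMod 2) × (Fin n → ZMod 2),
          ∑ w', ∑ z', f (w', z') * signOf (p.1 ⬝ᵥ w') * signOf (p.2 ⬝ᵥ z') *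
            (signOf (p.1 ⬝ᵥ w) * signOf (p.2 ⬝ᵥ z)) := by
        rw [Finset.mul_sum]
        refine Finset.sum_congr rfl fun p _ => ?_
        rw [mul_assoc]
        congr 1
        rw [Finset.sum_mul]
        refine Finset.sum_congr rfl fun w' _ => ?_
        rw [Finset.sum_mul]
    _ = ((2 : ℝ) ^ (2 * n))⁻¹ * ∑ w', ∑ z', ∑ p : (Fin n → ZMod 2) × (Fin n → ZMod 2),
          f (w', z') * signOf (p.1 ⬝ᵥ w') * signOf (p.2 ⬝ᵥ z') *
            (signOf (p.1 ⬝ᵥ w) * signOf (p.2 ⬝ᵥ z)) := by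
        congr 1
        rw [Finset.sum_comm]
        exact Finset.sum_congr rfl fun w' _ => Finset.sum_comm
    _ = f (w, z) := by
        have h2 : ∀ w' z' : Fin n → ZMod 2,
            (∑ p : (Fin n → ZMod 2) × (Fin n → ZMod 2),
              f (w', z') * signOf (p.1 ⬝ᵥ w') * signOf (p.2 ⬝ᵥ z') *
                (signOf (p.1 ⬝ᵥ w) * signOf (p.2 ⬝ᵥ z)))
            = f (w', z') * ((if w' = w then ((2:ℝ)^n) else 0) * (if z' = z then ((2:ℝ)^n) else 0)) := by
          intro w' z'
          rw [Fintype.sum_prod_type]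
          exact key w' z'
        simp only [h2]
        simp only [mul_ite, mul_zero, Finset.sum_ite_eq', Finset.mem_univ, if_true]
        have h4 : ((2:ℝ)^(2*n)) = 2^n * 2^n := by rw [two_mul, pow_add]
        have h5 : ((2:ℝ)^n) ≠ 0 := by positivity
        rw [h4]
        field_simp
        rw [Finset.sum_eq_single w (by intro b _ hb; simp [hb]) (by simp)]
        simp only [if_true]
        ring

private lemma traceEq (n : ℕ) (C : Matrix (Fin n → ZMod 2) (Fin n → ZMod 2) ℂ)
    (s s' : Fin n → ZMod 2) :
    (Matrix.diagonal (fun w => (signOf (s ⬝ᵥ w) : ℂ)) * Cᴴ *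
        Matrix.diagonal (fun z => (signOf (s' ⬝ᵥ z) : ℂ)) * C).trace
      = ∑ w, ∑ z, ((signOf (s ⬝ᵥ w) * signOf (s' ⬝ᵥ z) * (‖C z w‖) ^ 2 : ℝ) : ℂ) := by
  rw [Matrix.trace]
  simp only [Matrix.diag_apply, Matrix.mul_apply, Matrix.diagonal_apply, ite_mul, zero_mul,
    mul_ite, mul_zero, Finset.sum_ite_eq, Finset.sum_ite_eq', Finset.mem_univ, if_true,
    conjTranspose_apply, Finset.sum_mul, Finset.mul_sum]
  refine Finset.sum_congr rfl fun w _ => Finset.sum_congr rfl fun z _ => ?_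
  push_cast
  have key : ((‖C z w‖ : ℝ) : ℂ) ^ 2 = (starRingEnd ℂ) (C z w) * C z w := by
    rw [← Complex.ofReal_pow, Complex.sq_norm, Complex.normSq_eq_conj_mul_self]
  rw [Complex.star_def, key]
  ring

private lemma colSum (n : ℕ) (C : Matrix (Fin n → ZMod 2) (Fin n → ZMod 2) ℂ)
    (hC : C ∈ Matrix.unitaryGroup (Fin n → ZMod 2) ℂ) (w : Fin n → ZMod 2) :
    ∑ z, (‖C z w‖) ^ 2 = 1 := by
  have h1 : Cᴴ * C = 1 := (Matrix.mem_unitaryGroup_iff').mp hC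
  have h2 : (Cᴴ * C) w w = 1 := by rw [h1]; simp
  rw [Matrix.mul_apply] at h2
  have h3 : ∑ z, ((‖C z w‖ ^ 2 : ℝ) : ℂ) = 1 := by
    rw [← h2]
    refine Finset.sum_congr rfl fun z _ => ?_
    rw [conjTranspose_apply, Complex.star_def, mul_comm, Complex.mul_conj, ← Complex.sq_norm]
  exact_mod_cast h3

theorem dqc1_simulates_half_bqp_sparse_fourier (n : ℕ)
    (C : Matrix (Fin n → ZMod 2) (Fin n → ZMod 2) ℂ)
    (hC : C ∈ Matrix.unitaryGroup (Fin n → ZMod 2) ℂ)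
    (f : (Fin n → ZMod 2) × (Fin n → ZMod 2) → ℝ)
    (M : Finset ((Fin n → ZMod 2) × (Fin n → ZMod 2))) :
    ‖((((1 / 2 ^ n) * ∑ w, ∑ z, ‖C z w‖ ^ 2 * f (w, z) : ℝ) : ℂ) -
          ∑ p ∈ M,
            (((2 : ℝ) ^ (2 * n))⁻¹ *
                ∑ w, ∑ z, f (w, z) * signOf (p.1 ⬝ᵥ w) * signOf (p.2 ⬝ᵥ z) : ℝ) *
              ((1 / 2 ^ n : ℂ) *
                (Matrix.diagonal (fun w => (signOf (p.1 ⬝ᵥ w) : ℂ)) * Cᴴ *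
                    Matrix.diagonal (fun z => (signOf (p.2 ⬝ᵥ z) : ℂ)) * C).trace))‖ ≤
      ∑ p ∈ Mᶜ,
        |((2 : ℝ) ^ (2 * n))⁻¹ *
            ∑ w, ∑ z, f (w, z) * signOf (p.1 ⬝ᵥ w) * signOf (p.2 ⬝ᵥ z)| := by
  classical
  set fh : ((Fin n → ZMod 2) × (Fin n → ZMod 2)) → ℝ := fun p =>
    ((2 : ℝ) ^ (2 * n))⁻¹ *
      ∑ w, ∑ z, f (w, z) * signOf (p.1 ⬝ᵥ w) * signOf (p.2 ⬝ᵥ z) with hfh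
  set t : ((Fin n → ZMod 2) × (Fin n → ZMod 2)) → ℝ := fun p =>
    ((2 : ℝ) ^ n)⁻¹ *
      ∑ w, ∑ z, signOf (p.1 ⬝ᵥ w) * signOf (p.2 ⬝ᵥ z) * (‖C z w‖) ^ 2 with ht
  have hpow : ((2 : ℝ) ^ n) ≠ 0 := by positivity
  -- trace term equals ↑(t p)
  have htr : ∀ p : (Fin n → ZMod 2) × (Fin n → ZMod 2),
      ((1 / 2 ^ n : ℂ) *
        (Matrix.diagonal (fun w => (signOf (p.1 ⬝ᵥ w) : ℂ)) * Cᴴ *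
            Matrix.diagonal (fun z => (signOf (p.2 ⬝ᵥ z) : ℂ)) * C).trace)
        = ((t p : ℝ) : ℂ) := by
    intro p
    rw [traceEq n C p.1 p.2, ht]
    push_cast
    rw [one_div]
  -- rewrite the M-sum
  have hMsum : (∑ p ∈ M,
      (((2 : ℝ) ^ (2 * n))⁻¹ *
          ∑ w, ∑ z, f (w, z) * signOf (p.1 ⬝ᵥ w) * signOf (p.2 ⬝ᵥ z) : ℝ) *
        ((1 / 2 ^ n : ℂ) *
          (Matrix.diagonal (fun w => (signOf (p.1 ⬝ᵥ w) : ℂ)) * Cᴴ *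
              Matrix.diagonal (fun z => (signOf (p.2 ⬝ᵥ z) : ℂ)) * C).trace))
      = (((∑ p ∈ M, fh p * t p : ℝ)) : ℂ) := by
    rw [Complex.ofReal_sum]
    refine Finset.sum_congr rfl fun p _ => ?_
    rw [htr p, ← Complex.ofReal_mul]
  rw [hMsum, ← Complex.ofReal_sub, Complex.norm_real, Real.norm_eq_abs]
  -- total sum identity
  have hTot : (∑ p : (Fin n → ZMod 2) × (Fin n → ZMod 2), fh p * t p)
      = (1 / 2 ^ n : ℝ) * ∑ w, ∑ z, ‖C z w‖ ^ 2 * f (w, z) := by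
    have e1 : ∀ p : (Fin n → ZMod 2) × (Fin n → ZMod 2),
        fh p * t p = ∑ w, ∑ z, ((2 : ℝ) ^ n)⁻¹ *
          ((fh p * (signOf (p.1 ⬝ᵥ w) * signOf (p.2 ⬝ᵥ z))) * (‖C z w‖) ^ 2) := by
      intro p
      simp only [ht, Finset.mul_sum]
      refine Finset.sum_congr rfl fun w _ => Finset.sum_congr rfl fun z _ => ?_
      ring
    calc (∑ p : (Fin n → ZMod 2) × (Fin n → ZMod 2), fh p * t p)
        = ∑ w, ∑ z, ∑ p : (Fin n → ZMod 2) × (Fin n → ZMod 2), ((2 : ℝ) ^ n)⁻¹ *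
            ((fh p * (signOf (p.1 ⬝ᵥ w) * signOf (p.2 ⬝ᵥ z))) * (‖C z w‖) ^ 2) := by
          simp only [e1]
          rw [Finset.sum_comm]
          exact Finset.sum_congr rfl fun w _ => Finset.sum_comm
      _ = ∑ w, ∑ z, ((2 : ℝ) ^ n)⁻¹ *
            ((∑ p : (Fin n → ZMod 2) × (Fin n → ZMod 2),
              fh p * (signOf (p.1 ⬝ᵥ w) * signOf (p.2 ⬝ᵥ z))) * (‖C z w‖) ^ 2) := by
          refine Finset.sum_congr rfl fun w _ => Finset.sum_congr rfl fun z _ => ?_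
          rw [← Finset.mul_sum, ← Finset.sum_mul]
      _ = ∑ w, ∑ z, ((2 : ℝ) ^ n)⁻¹ * (f (w, z) * (‖C z w‖) ^ 2) := by
          refine Finset.sum_congr rfl fun w _ => Finset.sum_congr rfl fun z _ => ?_
          congr 2
          have := inversion n f w z
          simpa only [hfh] using this
      _ = (1 / 2 ^ n : ℝ) * ∑ w, ∑ z, ‖C z w‖ ^ 2 * f (w, z) := by
          rw [one_div, Finset.mul_sum]
          refine Finset.sum_congr rfl fun w _ => ?_
          rw [Finset.mul_sum]
          refine Finset.sum_congr rfl fun z _ => ?_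
          ring
  -- pass to the complement
  have hcompl : (1 / 2 ^ n : ℝ) * (∑ w, ∑ z, ‖C z w‖ ^ 2 * f (w, z)) -
      (∑ p ∈ M, fh p * t p) = ∑ p ∈ Mᶜ, fh p * t p := by
    rw [← hTot, ← Finset.sum_add_sum_compl M (fun p => fh p * t p)]
    ring
  rw [hcompl]
  -- bound |t p| ≤ 1
  have htb : ∀ p : (Fin n → ZMod 2) × (Fin n → ZMod 2), |t p| ≤ 1 := by
    intro p
    have h1 : |∑ w, ∑ z, signOf (p.1 ⬝ᵥ w) * signOf (p.2 ⬝ᵥ z) * (‖C z w‖) ^ 2|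
        ≤ (2 : ℝ) ^ n := by
      calc |∑ w, ∑ z, signOf (p.1 ⬝ᵥ w) * signOf (p.2 ⬝ᵥ z) * (‖C z w‖) ^ 2|
          ≤ ∑ w, |∑ z, signOf (p.1 ⬝ᵥ w) * signOf (p.2 ⬝ᵥ z) * (‖C z w‖) ^ 2| :=
            Finset.abs_sum_le_sum_abs _ _
        _ ≤ ∑ w, ∑ z, |signOf (p.1 ⬝ᵥ w) * signOf (p.2 ⬝ᵥ z) * (‖C z w‖) ^ 2| :=
            Finset.sum_le_sum fun w _ => Finset.abs_sum_le_sum_abs _ _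
        _ = ∑ w, ∑ z, (‖C z w‖) ^ 2 := by
            refine Finset.sum_congr rfl fun w _ => Finset.sum_congr rfl fun z _ => ?_
            rw [abs_mul, abs_mul, abs_signOf, abs_signOf, one_mul, one_mul,
              abs_of_nonneg (by positivity)]
        _ = ∑ _w : Fin n → ZMod 2, (1 : ℝ) :=
            Finset.sum_congr rfl fun w _ => colSum n C hC w
        _ = (2 : ℝ) ^ n := by
            simp [Finset.card_univ, Fintype.card_fun]
    have h2 : |t p| = ((2 : ℝ) ^ n)⁻¹ *
        |∑ w, ∑ z, signOf (p.1 ⬝ᵥ w) * signOf (p.2 ⬝ᵥ z) * (‖C z w‖) ^ 2| := by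
      simp only [ht]
      rw [abs_mul, abs_of_nonneg (by positivity : (0:ℝ) ≤ ((2 : ℝ) ^ n)⁻¹)]
    rw [h2]
    calc ((2 : ℝ) ^ n)⁻¹ *
        |∑ w, ∑ z, signOf (p.1 ⬝ᵥ w) * signOf (p.2 ⬝ᵥ z) * (‖C z w‖) ^ 2|
        ≤ ((2 : ℝ) ^ n)⁻¹ * (2 : ℝ) ^ n := by
          exact mul_le_mul_of_nonneg_left h1 (by positivity)
      _ = 1 := inv_mul_cancel₀ hpow
  -- final estimate
  calc |∑ p ∈ Mᶜ, fh p * t p| ≤ ∑ p ∈ Mᶜ, |fh p * t p| := Finset.abs_sum_le_sum_abs _ _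
    _ ≤ ∑ p ∈ Mᶜ,
        |((2 : ℝ) ^ (2 * n))⁻¹ *
            ∑ w, ∑ z, f (w, z) * signOf (p.1 ⬝ᵥ w) * signOf (p.2 ⬝ᵥ z)| := by
        refine Finset.sum_le_sum fun p _ => ?_
        have : |fh p * t p| ≤ |fh p| := by
          rw [abs_mul]
          exact mul_le_of_le_one_right (abs_nonneg _) (htb p)
        simpa only [hfh] using this
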